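/- Let X be an n-by-d real matrix with X^T X invertible, Y in R^n, let x_1 in R^d be nonzero, and let y_1 in R. For lambda > 0 define theta_full(lambda) = (X^T X + lambda^2 x_1 x_1^T)^{-1} (X^T Y + lambda^2 y_1 x_1) and the influence-method update theta_inf(lambda) = theta_full(lambda) + lambda^2 (<theta_full(lambda), x_1> - y_1) (X^T X + lambda^2 x_1 x_1^T)^{-1} x_1. Then as lambda tends to infinity, theta_inf(lambda) - theta_full(lambda) converges to the zero vector; that is, in the large-outlier limit the influence method does not update the parameters at all. -/

import Mathlib

open Matrix Filter

private lemma vecMulVec_mulVec' {d : ℕ} (w v u : Fin d → ℝ) :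
    (vecMulVec w v) *ᵥ u = (v ⬝ᵥ u) • w := by
  funext i
  simp only [mulVec, vecMulVec_apply, dotProduct, Pi.smul_apply, smul_eq_mul,
    Finset.sum_mul]
  exact Finset.sum_congr rfl fun j _ => by ring

private lemma smul_vecMulVec_posSemidef {d : ℕ} (x : Fin d → ℝ) {s : ℝ} (hs : 0 ≤ s) :
    (s • vecMulVec x x).PosSemidef := by
  refine posSemidef_iff_dotProduct_mulVec.mpr ⟨?_, fun y => ?_⟩
  · ext i j
    simp [conjTranspose_apply, vecMulVec_apply, mul_comm]
  · have h : (s • vecMulVec x x) *ᵥ y = (s * (x ⬝ᵥ y)) • x := by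
      rw [smul_mulVec, vecMulVec_mulVec', smul_smul]
    rw [h, dotProduct_smul, star_trivial, smul_eq_mul, dotProduct_comm y x]
    have := mul_self_nonneg (x ⬝ᵥ y)
    nlinarith

/-- In the large-outlier limit, the influence-method update does not move the
parameters at all: `θ_inf(λ) - θ_full(λ) → 0` as `λ → ∞`. -/
theorem stmt_16 {n d : ℕ} (X : Matrix (Fin n) (Fin d) ℝ) (hX : IsUnit (Xᵀ * X))
    (Y : Fin n → ℝ) (x₁ : Fin d → ℝ) (hx₁ : x₁ ≠ 0) (y₁ : ℝ) :
    let θfull : ℝ → (Fin d → ℝ) := fun lam =>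
      (Xᵀ * X + lam ^ 2 • vecMulVec x₁ x₁)⁻¹.mulVec
        (Xᵀ.mulVec Y + (lam ^ 2 * y₁) • x₁)
    let θinf : ℝ → (Fin d → ℝ) := fun lam =>
      θfull lam + (lam ^ 2 * (θfull lam ⬝ᵥ x₁ - y₁)) •
        (Xᵀ * X + lam ^ 2 • vecMulVec x₁ x₁)⁻¹.mulVec x₁
    Tendsto (fun lam : ℝ => θinf lam - θfull lam) atTop (nhds 0) := by
  intro θfull θinf
  set A : Matrix (Fin d) (Fin d) ℝ := Xᵀ * X with hAdef
  -- A is positive definite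
  have hApd : A.PosDef := by
    refine posDef_iff_dotProduct_mulVec.mpr ⟨?_, fun y hy => ?_⟩
    · ext i j
      simp only [conjTranspose_apply, star_trivial, hAdef, mul_apply, transpose_apply]
      exact Finset.sum_congr rfl fun k _ => mul_comm _ _
    · have h1 : star y ⬝ᵥ (A *ᵥ y) = (X *ᵥ y) ⬝ᵥ (X *ᵥ y) := by
        rw [star_trivial, hAdef, ← mulVec_mulVec, dotProduct_mulVec, vecMul_transpose]
      have h2 : X *ᵥ y ≠ 0 := by
        intro h0
        apply hy
        have hinj := mulVec_injective_iff_isUnit.mpr hX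
        have : A *ᵥ y = A *ᵥ 0 := by
          rw [hAdef, ← mulVec_mulVec, h0, mulVec_zero, mulVec_zero]
        exact hinj this
      have := dotProduct_star_self_pos_iff.mpr h2
      rw [star_trivial] at this
      rw [h1]; exact this
  have hAdet : IsUnit A.det := (isUnit_iff_isUnit_det A).mp hX
  have hAinv : A⁻¹.PosDef := hApd.inv
  set w : Fin d → ℝ := A⁻¹ *ᵥ x₁ with hwdef
  set c : ℝ := x₁ ⬝ᵥ w with hcdef
  have hc : 0 < c := by
    have := hAinv.dotProduct_mulVec_pos hx₁
    rwa [star_trivial] at this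
  set u : ℝ := w ⬝ᵥ (Xᵀ *ᵥ Y) with hudef
  -- rewrite the difference as an explicit scalar function times a fixed vector
  have hfun : (fun lam : ℝ => θinf lam - θfull lam) =
      fun lam : ℝ => ((u - y₁) * (lam ^ 2 * ((1 + lam ^ 2 * c)⁻¹) ^ 2)) • w := by
    funext lam
    set B : Matrix (Fin d) (Fin d) ℝ := A + lam ^ 2 • vecMulVec x₁ x₁ with hBdef
    have hBpd : B.PosDef := hApd.add_posSemidef (smul_vecMulVec_posSemidef x₁ (by positivity))
    have hBdet : IsUnit B.det := (isUnit_iff_isUnit_det B).mp hBpd.isUnit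
    have ht : (0:ℝ) < 1 + lam ^ 2 * c := by positivity
    set t : ℝ := (1 + lam ^ 2 * c)⁻¹ with htdef
    -- B *ᵥ (t • w) = x₁
    have hBw : B *ᵥ w = (1 + lam ^ 2 * c) • x₁ := by
      rw [hBdef, add_mulVec, smul_mulVec, vecMulVec_mulVec', hwdef,
        mulVec_mulVec, mul_nonsing_inv A hAdet, one_mulVec, ← hwdef, ← hcdef]
      funext i
      simp only [Pi.add_apply, Pi.smul_apply, smul_eq_mul]
      ring
    have hkey : B *ᵥ (t • w) = x₁ := by
      rw [mulVec_smul, hBw, smul_smul, htdef, inv_mul_cancel₀ ht.ne', one_smul]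
    have hBinvx : B⁻¹ *ᵥ x₁ = t • w := by
      rw [← hkey, mulVec_mulVec, nonsing_inv_mul B hBdet, one_mulVec]
    have hBsym : Bᵀ = B := by
      rw [← conjTranspose_eq_transpose_of_trivial]; exact hBpd.isHermitian
    have hBsymminv : B⁻¹ᵀ = B⁻¹ := by rw [transpose_nonsing_inv, hBsym]
    -- the dot product of θfull with x₁
    have hdot : θfull lam ⬝ᵥ x₁ = t * (u + lam ^ 2 * y₁ * c) := by
      show (B⁻¹ *ᵥ (Xᵀ *ᵥ Y + (lam ^ 2 * y₁) • x₁)) ⬝ᵥ x₁ = _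
      rw [dotProduct_comm, dotProduct_mulVec, ← hBsymminv, vecMul_transpose, hBinvx,
        smul_dotProduct, dotProduct_add, dotProduct_smul, ← hudef, smul_eq_mul,
        smul_eq_mul, dotProduct_comm w x₁, ← hcdef]
    show θfull lam + (lam ^ 2 * (θfull lam ⬝ᵥ x₁ - y₁)) • (B⁻¹ *ᵥ x₁) - θfull lam = _
    rw [add_sub_cancel_left, hdot, hBinvx, smul_smul]
    congr 1
    rw [htdef]
    field_simp
    ring
  rw [hfun]
  -- scalar limit
  have hscal : Tendsto (fun lam : ℝ => lam ^ 2 * ((1 + lam ^ 2 * c)⁻¹) ^ 2)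
      atTop (nhds 0) := by
    have hbound : Tendsto (fun lam : ℝ => 1 / (c ^ 2 * lam ^ 2)) atTop (nhds 0) := by
      simp only [one_div]
      exact (((tendsto_pow_atTop (n := 2) (by norm_num)).const_mul_atTop
        (show (0:ℝ) < c ^ 2 by positivity)).inv_tendsto_atTop)
    refine squeeze_zero' (Eventually.of_forall fun lam => by positivity)
      ?_ hbound
    filter_upwards [eventually_ge_atTop (1:ℝ)] with lam hlam
    have hl0 : (0:ℝ) < lam := lt_of_lt_of_le one_pos hlam
    have h1 : (0:ℝ) < lam ^ 2 * c := by positivity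
    have h2 : (lam ^ 2 * c) ^ 2 ≤ (1 + lam ^ 2 * c) ^ 2 := by nlinarith
    calc lam ^ 2 * ((1 + lam ^ 2 * c)⁻¹) ^ 2
        = lam ^ 2 / (1 + lam ^ 2 * c) ^ 2 := by rw [div_eq_mul_inv, inv_pow]
      _ ≤ lam ^ 2 / (lam ^ 2 * c) ^ 2 :=
          div_le_div_of_nonneg_left (by positivity) (by positivity) h2
      _ = 1 / (c ^ 2 * lam ^ 2) := by field_simp
  have := (hscal.const_mul (u - y₁)).smul_const w
  simpa using this
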